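/- In the alternating two-agent floating–floating model, where agent 1 acts exactly at the even times and agent 2 acts exactly at time 0 and at the odd times, if 0 < r1 + r2 < 2, then x(t) and y(t) both converge as t → ∞ to the common limit (r2·k1 + (r1 − r1·r2)·k2)/(r1 + r2 − r1·r2), which equals (1/2)·(k1 + k2 + (k2 − k1)·(r1 − r2 − r1·r2)/(r1 + r2 − r1·r2)). -/

import Mathlib

/-- in the alternating two-agent floating–floating model (agent 1
acts exactly at even times, agent 2 at time 0 and at odd times), with
0 < r1 + r2 < 2, both sequences converge to the stated common limit. -/
theorem float_float_alternating_limit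
    (k1 k2 r1 r2 : ℝ) (hk : k1 ≤ k2)
    (hr1 : r1 ∈ Set.Icc (0:ℝ) 1) (hr2 : r2 ∈ Set.Icc (0:ℝ) 1)
    (hsum0 : 0 < r1 + r2) (hsum2 : r1 + r2 < 2)
    (x y : ℕ → ℝ) (hx0 : x 0 = k1) (hy0 : y 0 = k2)
    (heven : ∀ t : ℕ, Even (t + 1) →
      x (t + 1) = (1 - r1) * x t + r1 * y t ∧ y (t + 1) = y t)
    (hodd : ∀ t : ℕ, Odd (t + 1) →
      y (t + 1) = (1 - r2) * y t + r2 * x t ∧ x (t + 1) = x t) :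
    Filter.Tendsto x Filter.atTop
      (nhds ((r2 * k1 + (r1 - r1 * r2) * k2) / (r1 + r2 - r1 * r2))) ∧
    Filter.Tendsto y Filter.atTop
      (nhds ((r2 * k1 + (r1 - r1 * r2) * k2) / (r1 + r2 - r1 * r2))) ∧
    (r2 * k1 + (r1 - r1 * r2) * k2) / (r1 + r2 - r1 * r2) =
      (1 / 2) * (k1 + k2 + (k2 - k1) * (r1 - r2 - r1 * r2) / (r1 + r2 - r1 * r2)) := by
  obtain ⟨hr1a, hr1b⟩ := hr1
  obtain ⟨hr2a, hr2b⟩ := hr2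
  have hs : (0:ℝ) < r1 + r2 - r1 * r2 := by nlinarith
  set s : ℝ := r1 + r2 - r1 * r2 with hs_def
  set q : ℝ := (1 - r1) * (1 - r2) with hq_def
  have hq0 : 0 ≤ q := mul_nonneg (by linarith) (by linarith)
  have hq1 : q < 1 := by rw [hq_def]; nlinarith
  set L : ℝ := (r2 * k1 + (r1 - r1 * r2) * k2) / s with hL_def
  set c : ℝ := (k2 - k1) / s with hc_def
  have key : ∀ t, x t = L - r1 * (1 - r2) * c * q ^ (t / 2) ∧
      y t = L + r2 * c * q ^ ((t + 1) / 2) := by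
    intro t
    induction t with
    | zero =>
      constructor
      · rw [hx0]; simp only [Nat.zero_div, pow_zero, mul_one, hL_def, hc_def]
        field_simp
        ring
      · rw [hy0]; norm_num [hL_def, hc_def]
        field_simp
        ring
    | succ t ih =>
      obtain ⟨ihx, ihy⟩ := ih
      rcases Nat.even_or_odd t with ⟨n, hn⟩ | ⟨n, hn⟩
      · -- t = n + n, so t + 1 is odd
        obtain ⟨hy', hx'⟩ := hodd t ⟨n, by omega⟩
        have e1 : t / 2 = n := by omega
        have e2 : (t + 1) / 2 = n := by omega
        have e3 : (t + 1 + 1) / 2 = n + 1 := by omega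
        constructor
        · rw [hx', ihx, e1, e2]
        · rw [hy', ihx, ihy, e1, e2, e3, pow_succ]
          linear_combination (r2 * c * q ^ n) * hq_def
      · -- t = 2n + 1, so t + 1 is even
        obtain ⟨hx', hy'⟩ := heven t ⟨n + 1, by omega⟩
        have e1 : t / 2 = n := by omega
        have e2 : (t + 1) / 2 = n + 1 := by omega
        have e3 : (t + 1 + 1) / 2 = n + 1 := by omega
        constructor
        · rw [hx', ihx, ihy, e1, e2, pow_succ]
          linear_combination (r1 * c * q ^ n) * hq_def
        · rw [hy', ihy, e2, e3]
  have hdiv : Filter.Tendsto (fun t : ℕ => (t / 2 : ℕ)) Filter.atTop Filter.atTop :=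
    Filter.tendsto_atTop_atTop.mpr fun b => ⟨2 * b, fun a ha => by omega⟩
  have hdiv1 : Filter.Tendsto (fun t : ℕ => ((t + 1) / 2 : ℕ)) Filter.atTop Filter.atTop :=
    Filter.tendsto_atTop_atTop.mpr fun b => ⟨2 * b, fun a ha => by omega⟩
  have hq : Filter.Tendsto (fun n : ℕ => q ^ n) Filter.atTop (nhds 0) :=
    tendsto_pow_atTop_nhds_zero_of_lt_one hq0 hq1
  have hxlim : Filter.Tendsto x Filter.atTop (nhds L) := by
    have h1 : Filter.Tendsto (fun t : ℕ => L - r1 * (1 - r2) * c * q ^ (t / 2))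
        Filter.atTop (nhds (L - r1 * (1 - r2) * c * 0)) :=
      tendsto_const_nhds.sub ((hq.comp hdiv).const_mul _)
    rw [mul_zero, sub_zero] at h1
    exact h1.congr fun t => ((key t).1).symm
  have hylim : Filter.Tendsto y Filter.atTop (nhds L) := by
    have h1 : Filter.Tendsto (fun t : ℕ => L + r2 * c * q ^ ((t + 1) / 2))
        Filter.atTop (nhds (L + r2 * c * 0)) :=
      tendsto_const_nhds.add ((hq.comp hdiv1).const_mul _)
    rw [mul_zero, add_zero] at h1
    exact h1.congr fun t => ((key t).2).symm
  refine ⟨hxlim, hylim, ?_⟩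
  rw [hL_def, hs_def]
  have hs' : r1 + r2 - r1 * r2 ≠ 0 := ne_of_gt (by nlinarith)
  linear_combination ((k1 + k2) / 2) * mul_inv_cancel₀ hs'
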